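/- For every k ∈ ℕ₀ and every x ∈ ℂ with |x| = 1, Σ_{j=1}^n |P_k^{(j)}(x)|² = n^{k+1}; consequently |P_k^{(j)}(x)| ≤ n^{(k+1)/2} for every j with 1 ≤ j ≤ n. -/

import Mathlib

open Polynomial

/-- The vector of polynomials `(P_k^{(1)}, …, P_k^{(n)})` defined by
`P_0^{(j)}(x) = x` and `v_{k+1}(x) = A^{(n,k)}(x) v_k(x)`, where `A^{(n,k)}(x)` has
`(j,l)` entry `ω^{jl} x^{l·n^k}` with `ω = exp(2πi/n)` (indices `0`-based). -/
noncomputable def Fvec (n : ℕ) : ℕ → Fin n → Polynomial ℂ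
  | 0 => fun _ => Polynomial.X
  | k + 1 => fun j => ∑ l : Fin n,
      Polynomial.C (Complex.exp (2 * Real.pi * Complex.I / n) ^ ((j : ℕ) * (l : ℕ)))
        * Polynomial.X ^ ((l : ℕ) * n ^ k) * Fvec n k l

/-- For `|x| = 1`, `∑_j |P_k^{(j)}(x)|² = n^{k+1}`, and hence
`|P_k^{(j)}(x)| ≤ n^{(k+1)/2}` for every `j`. -/
theorem stmt16 (n : ℕ) (hn : 2 ≤ n) (k : ℕ) (x : ℂ) (hx : ‖x‖ = 1) :
    (∑ j : Fin n, ‖(Fvec n k j).eval x‖ ^ 2 = (n : ℝ) ^ (k + 1)) ∧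
    (∀ j : Fin n, ‖(Fvec n k j).eval x‖ ≤ (n : ℝ) ^ (((k : ℝ) + 1) / 2)) := by
  have hn0 : n ≠ 0 := by omega
  set ω : ℂ := Complex.exp (2 * Real.pi * Complex.I / n) with hωdef
  have hprim : IsPrimitiveRoot ω n := Complex.isPrimitiveRoot_exp n hn0
  have hωn : ω ^ n = 1 := hprim.pow_eq_one
  have hω0 : ω ≠ 0 := fun h => by simp [h, zero_pow hn0] at hωn
  have hconj : (starRingEnd ℂ) ω = ω⁻¹ := by
    rw [hωdef, ← Complex.exp_conj, ← Complex.exp_neg]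
    congr 1
    simp [map_div₀, Complex.conj_I, map_ofNat]
    ring
  have hxconj : x * (starRingEnd ℂ) x = 1 := by
    rw [Complex.mul_conj, Complex.normSq_eq_norm_sq, hx]
    norm_num
  -- orthogonality of columns of the DFT matrix
  have key : ∀ a b : Fin n,
      ∑ j : Fin n, ω ^ ((j : ℕ) * (a : ℕ)) * (starRingEnd ℂ) (ω ^ ((j : ℕ) * (b : ℕ)))
        = if a = b then (n : ℂ) else 0 := by
    intro a b
    have hterm : ∀ j : Fin n,
        ω ^ ((j : ℕ) * (a : ℕ)) * (starRingEnd ℂ) (ω ^ ((j : ℕ) * (b : ℕ)))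
          = (ω ^ ((a : ℤ) - (b : ℤ))) ^ (j : ℕ) := by
      intro j
      rw [map_pow, hconj, ← zpow_natCast ω ((j : ℕ) * (a : ℕ)), inv_pow,
        ← zpow_natCast ω ((j : ℕ) * (b : ℕ)), ← zpow_neg, ← zpow_add₀ hω0,
        ← zpow_natCast (ω ^ ((a : ℤ) - (b : ℤ))) (j : ℕ), ← zpow_mul]
      congr 1
      push_cast
      ring
    rw [Finset.sum_congr rfl fun j _ => hterm j]
    by_cases hab : a = b
    · subst hab
      simp
    · rw [if_neg hab]
      have hζ1 : ω ^ ((a : ℤ) - (b : ℤ)) ≠ 1 := by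
        intro h
        have hd := (hprim.zpow_eq_one_iff_dvd _).mp h
        rcases hd with ⟨c, hc⟩
        have ha' : (a : ℤ) < n := by exact_mod_cast a.2
        have hb' : (b : ℤ) < n := by exact_mod_cast b.2
        have hne : (a : ℤ) - (b : ℤ) ≠ 0 := by
          intro h0
          exact hab (Fin.ext (by omega))
        have habs : |(a : ℤ) - (b : ℤ)| < n := by
          rw [abs_lt]
          constructor <;> [skip; skip] <;> omega
        have : ((a : ℤ) - (b : ℤ)) = 0 :=
          Int.eq_zero_of_abs_lt_dvd ⟨c, hc⟩ habs
        exact hne this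
      have hζn : (ω ^ ((a : ℤ) - (b : ℤ))) ^ n = 1 := by
        rw [← zpow_natCast (ω ^ ((a : ℤ) - (b : ℤ))) n, ← zpow_mul, mul_comm, zpow_mul,
          zpow_natCast, hωn, one_zpow]
      rw [Fin.sum_univ_eq_sum_range (fun i => (ω ^ ((a : ℤ) - (b : ℤ))) ^ i) n,
        geom_sum_eq hζ1, hζn]
      simp
  -- main Parseval identity, by induction
  have main : ∀ K, ∑ j : Fin n,
      ((Fvec n K j).eval x * (starRingEnd ℂ) ((Fvec n K j).eval x)) = (n : ℂ) ^ (K + 1) := by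
    intro K
    induction K with
    | zero =>
      simp [Fvec, hxconj]
    | succ k ih =>
      have heval : ∀ j : Fin n, (Fvec n (k + 1) j).eval x
          = ∑ l : Fin n, ω ^ ((j : ℕ) * (l : ℕ)) * x ^ ((l : ℕ) * n ^ k)
              * (Fvec n k l).eval x := by
        intro j
        simp [Fvec, hωdef, eval_finset_sum, eval_mul, eval_pow, eval_C]
      have step1 : (∑ j : Fin n,
            ((Fvec n (k + 1) j).eval x * (starRingEnd ℂ) ((Fvec n (k + 1) j).eval x)))
          = ∑ l : Fin n, ∑ m : Fin n,
              (∑ j : Fin n, ω ^ ((j : ℕ) * (l : ℕ)) * (starRingEnd ℂ) (ω ^ ((j : ℕ) * (m : ℕ)))) *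
              (x ^ ((l : ℕ) * n ^ k) * (starRingEnd ℂ) (x ^ ((m : ℕ) * n ^ k)) *
                ((Fvec n k l).eval x * (starRingEnd ℂ) ((Fvec n k m).eval x))) := by
        simp only [heval, map_sum, map_mul, Finset.sum_mul_sum]
        rw [Finset.sum_comm]
        refine Finset.sum_congr rfl fun l _ => ?_
        rw [Finset.sum_comm]
        refine Finset.sum_congr rfl fun m _ => ?_
        rw [Finset.sum_mul]
        exact Finset.sum_congr rfl fun j _ => by ring
      rw [step1]
      simp only [key, ite_mul, zero_mul, Finset.sum_ite_eq, Finset.mem_univ, if_true]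
      have hx1 : ∀ l : Fin n,
          x ^ ((l : ℕ) * n ^ k) * (starRingEnd ℂ) (x ^ ((l : ℕ) * n ^ k)) = 1 := by
        intro l
        rw [map_pow, ← mul_pow, hxconj, one_pow]
      calc ∑ l : Fin n, (n : ℂ) *
              (x ^ ((l : ℕ) * n ^ k) * (starRingEnd ℂ) (x ^ ((l : ℕ) * n ^ k)) *
                ((Fvec n k l).eval x * (starRingEnd ℂ) ((Fvec n k l).eval x)))
          = (n : ℂ) * ∑ l : Fin n,
              ((Fvec n k l).eval x * (starRingEnd ℂ) ((Fvec n k l).eval x)) := by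
            rw [Finset.mul_sum]
            exact Finset.sum_congr rfl fun l _ => by rw [hx1 l, one_mul]
        _ = (n : ℂ) ^ (k + 1 + 1) := by rw [ih]; ring
  have hsum : ∑ j : Fin n, ‖(Fvec n k j).eval x‖ ^ 2 = (n : ℝ) ^ (k + 1) := by
    have h2 : ((∑ j : Fin n, ‖(Fvec n k j).eval x‖ ^ 2 : ℝ) : ℂ)
        = (((n : ℝ) ^ (k + 1) : ℝ) : ℂ) := by
      push_cast
      rw [← main k]
      refine Finset.sum_congr rfl fun j _ => ?_
      rw [Complex.mul_conj]
      norm_cast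
      rw [Complex.sq_norm]
    exact_mod_cast h2
  refine ⟨hsum, fun j => ?_⟩
  have h1 : ‖(Fvec n k j).eval x‖ ^ 2 ≤ (n : ℝ) ^ (k + 1) := by
    rw [← hsum]
    exact Finset.single_le_sum (f := fun i => ‖(Fvec n k i).eval x‖ ^ 2)
      (fun i _ => by positivity) (Finset.mem_univ j)
  have h2 : (n : ℝ) ^ (k + 1) = ((n : ℝ) ^ (((k : ℝ) + 1) / 2)) ^ 2 := by
    rw [← Real.rpow_natCast ((n : ℝ) ^ (((k : ℝ) + 1) / 2)) 2,
      ← Real.rpow_natCast (n : ℝ) (k + 1), ← Real.rpow_mul (by positivity)]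
    congr 1
    push_cast
    ring
  rw [h2] at h1
  exact (pow_le_pow_iff_left₀ (by positivity) (by positivity) two_ne_zero).mp h1
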